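/- Let R be a nonsingular M-matrix of size K×K (R = sI − N with N nonnegative and ρ(N) < s) satisfying e'R ≥ 0' entrywise. Then for every λ > 0, the matrix R² + λI is invertible and the row vector e'(R² + λI)^{−1} is entrywise strictly positive. -/

import Mathlib

open Matrix Filter
open scoped ENNReal NNReal Topology Pointwise

namespace RowvecAux

attribute [local instance] Matrix.linftyOpNormedRing Matrix.linftyOpNormedAlgebra

variable {K : ℕ}

/-- entry evaluation as a continuous linear map -/
noncomputable def entryCLM (i j : Fin K) : Matrix (Fin K) (Fin K) ℂ →L[ℂ] ℂ :=
  LinearMap.toContinuousLinearMap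
    { toFun := fun A => A i j
      map_add' := fun _ _ => rfl
      map_smul' := fun _ _ => rfl }

/-- Spectrum of a matrix over ℂ attains its norm-sup, giving a strict uniform bound. -/
lemma exists_spec_bound [Nonempty (Fin K)] (M : Matrix (Fin K) (Fin K) ℂ) {s : ℝ}
    (hρ : ∀ μ ∈ spectrum ℂ M, ‖μ‖ < s) :
    ∃ ρ₀ : ℝ, 0 ≤ ρ₀ ∧ ρ₀ < s ∧ ∀ μ ∈ spectrum ℂ M, ‖μ‖ ≤ ρ₀ := by
  haveI : CompleteSpace (Matrix (Fin K) (Fin K) ℂ) := FiniteDimensional.complete ℂ _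
  obtain ⟨μ₀, hμ₀, hmax⟩ := (spectrum.isCompact M).exists_isMaxOn (spectrum.nonempty M)
    continuous_norm.continuousOn
  exact ⟨‖μ₀‖, norm_nonneg _, hρ _ hμ₀, fun μ hμ => hmax hμ⟩

lemma neumann [Nonempty (Fin K)] (M : Matrix (Fin K) (Fin K) ℂ) {s ρ₀ : ℝ}
    (hs : 0 < s) (hρ₀ : 0 ≤ ρ₀) (hρs : ρ₀ < s) (hspec : ∀ μ ∈ spectrum ℂ M, ‖μ‖ ≤ ρ₀)
    {c : ℂ} (hc : s ≤ ‖c‖) :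
    ∃ S : Matrix (Fin K) (Fin K) ℂ,
      (c • (1 : Matrix (Fin K) (Fin K) ℂ) - M) * S = 1 ∧
      S * (c • (1 : Matrix (Fin K) (Fin K) ℂ) - M) = 1 ∧
      ∀ i j, HasSum (fun p : ℕ => c⁻¹ ^ (p + 1) * (M ^ p) i j) (S i j) := by
  haveI : CompleteSpace (Matrix (Fin K) (Fin K) ℂ) := FiniteDimensional.complete ℂ _
  have hc0 : c ≠ 0 := by
    intro h; rw [h, norm_zero] at hc; linarith
  set y : Matrix (Fin K) (Fin K) ℂ := c⁻¹ • M with hy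
  -- spectral radius of y is < 1
  have hρy : spectralRadius ℂ y < 1 := by
    have hσ : spectrum ℂ y = (Units.mk0 c⁻¹ (inv_ne_zero hc0)) • (spectrum ℂ M : Set ℂ) :=
      spectrum.unit_smul_eq_smul M (Units.mk0 c⁻¹ (inv_ne_zero hc0))
    have hb : ∀ k ∈ spectrum ℂ y, (‖k‖₊ : ℝ≥0∞) ≤ ENNReal.ofReal (ρ₀ / s) := by
      intro k hk
      rw [hσ] at hk
      obtain ⟨μ, hμ, rfl⟩ := hk
      have h1 : ‖(Units.mk0 c⁻¹ (inv_ne_zero hc0)) • μ‖ = ‖c‖⁻¹ * ‖μ‖ := by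
        simp [Units.smul_def, norm_mul]
      have h2 : ‖c‖⁻¹ * ‖μ‖ ≤ ρ₀ / s := by
        have hμρ := hspec μ hμ
        have hρ0 : 0 ≤ ρ₀ := le_trans (norm_nonneg μ) hμρ
        have hcpos : (0:ℝ) < ‖c‖ := lt_of_lt_of_le hs hc
        have : ‖c‖⁻¹ ≤ s⁻¹ := by
          rw [inv_le_inv₀ hcpos hs]
          exact hc
        calc ‖c‖⁻¹ * ‖μ‖ ≤ s⁻¹ * ρ₀ :=
              mul_le_mul this hμρ (norm_nonneg μ) (inv_nonneg.mpr hs.le)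
          _ = ρ₀ / s := by rw [div_eq_mul_inv, mul_comm]
      rw [← enorm_eq_nnnorm, ← ofReal_norm]
      apply ENNReal.ofReal_le_ofReal
      simpa [Units.smul_def, smul_eq_mul, norm_mul, norm_inv] using h2
    have : spectralRadius ℂ y ≤ ENNReal.ofReal (ρ₀ / s) := by
      unfold spectralRadius
      exact iSup₂_le hb
    refine lt_of_le_of_lt this ?_
    rw [← ENNReal.ofReal_one]
    apply ENNReal.ofReal_lt_ofReal_iff_of_nonneg (div_nonneg hρ₀ hs.le) |>.2
    rw [div_lt_one hs]
    exact hρs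
  obtain ⟨q, hq1, hq2⟩ := ENNReal.lt_iff_exists_nnreal_btwn.mp hρy
  have hq2' : q < 1 := by exact_mod_cast hq2
  -- Gelfand's formula: eventually ‖y^n‖ ≤ q^n
  have hgel := spectrum.pow_nnnorm_pow_one_div_tendsto_nhds_spectralRadius y
  have hev : ∀ᶠ n : ℕ in atTop, (‖y ^ n‖₊ : ℝ≥0∞) ^ (1 / (n : ℝ)) < (q : ℝ≥0∞) :=
    hgel.eventually (gt_mem_nhds hq1)
  have hev2 : ∀ᶠ n : ℕ in atTop, ‖y ^ n‖ ≤ (q : ℝ) ^ n := by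
    filter_upwards [hev, eventually_ge_atTop 1] with n h1 h2
    have hn : (0:ℝ) < n := by exact_mod_cast h2
    have key : (‖y ^ n‖₊ : ℝ≥0∞) < (q : ℝ≥0∞) ^ (n : ℝ) := by
      have e1 : (‖y ^ n‖₊ : ℝ≥0∞) = ((‖y ^ n‖₊ : ℝ≥0∞) ^ (1 / (n:ℝ))) ^ (n : ℝ) := by
        rw [← ENNReal.rpow_mul, one_div, inv_mul_cancel₀ (ne_of_gt hn), ENNReal.rpow_one]
      rw [e1]
      exact ENNReal.rpow_lt_rpow h1 hn
    have : (‖y ^ n‖₊ : ℝ≥0∞) < ((q ^ n : ℝ≥0) : ℝ≥0∞) := by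
      rwa [ENNReal.coe_pow, ← ENNReal.rpow_natCast ((q : ℝ≥0∞)) n] at *
      
    have h3 : ‖y ^ n‖₊ < q ^ n := by exact_mod_cast this
    exact_mod_cast le_of_lt h3
  have hsum : Summable (fun n : ℕ => y ^ n) := by
    apply Summable.of_norm_bounded_eventually_nat (g := fun n => (q:ℝ) ^ n)
      (summable_geometric_of_lt_one q.coe_nonneg hq2') hev2
  have hy0 : Tendsto (fun n : ℕ => y ^ n) atTop (𝓝 0) := by
    apply squeeze_zero_norm' hev2
    exact tendsto_pow_atTop_nhds_zero_of_lt_one q.coe_nonneg hq2'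
  obtain ⟨S0, hS0⟩ := hsum
  -- (1-y) * S0 = 1
  have hmulL : (1 - y) * S0 = 1 := by
    have h1 : Tendsto (fun m => ∑ n ∈ Finset.range m, ((1 - y) * y ^ n)) atTop
        (𝓝 ((1 - y) * S0)) := (hS0.mul_left (1 - y)).tendsto_sum_nat
    have h2 : Tendsto (fun m => ∑ n ∈ Finset.range m, ((1 - y) * y ^ n)) atTop (𝓝 1) := by
      have he : ∀ m, ∑ n ∈ Finset.range m, ((1 - y) * y ^ n) = 1 - y ^ m := by
        intro m
        have : ∀ n : ℕ, (1 - y) * y ^ n = y ^ n - y ^ (n + 1) := by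
          intro n; rw [sub_mul, one_mul, pow_succ']
        simp_rw [this]
        rw [Finset.sum_range_sub' (fun n => y ^ n)]
        simp
      simp_rw [he]
      have := (tendsto_const_nhds (x := (1 : Matrix (Fin K) (Fin K) ℂ))).sub hy0
      simpa using this
    exact tendsto_nhds_unique h1 h2
  have hmulR : S0 * (1 - y) = 1 := by
    have h1 : Tendsto (fun m => ∑ n ∈ Finset.range m, (y ^ n * (1 - y))) atTop
        (𝓝 (S0 * (1 - y))) := (hS0.mul_right (1 - y)).tendsto_sum_nat
    have h2 : Tendsto (fun m => ∑ n ∈ Finset.range m, (y ^ n * (1 - y))) atTop (𝓝 1) := by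
      have he : ∀ m, ∑ n ∈ Finset.range m, (y ^ n * (1 - y)) = 1 - y ^ m := by
        intro m
        have : ∀ n : ℕ, y ^ n * (1 - y) = y ^ n - y ^ (n + 1) := by
          intro n; rw [mul_sub, mul_one, pow_succ]
        simp_rw [this]
        rw [Finset.sum_range_sub' (fun n => y ^ n)]
        simp
      simp_rw [he]
      have := (tendsto_const_nhds (x := (1 : Matrix (Fin K) (Fin K) ℂ))).sub hy0
      simpa using this
    exact tendsto_nhds_unique h1 h2
  refine ⟨c⁻¹ • S0, ?_, ?_, ?_⟩
  · have hfac : c • (1 : Matrix (Fin K) (Fin K) ℂ) - M = c • (1 - y) := by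
      rw [smul_sub, hy, smul_smul, mul_inv_cancel₀ hc0, one_smul]
    rw [hfac, smul_mul_assoc, mul_smul_comm, hmulL, smul_smul, mul_inv_cancel₀ hc0, one_smul]
  · have hfac : c • (1 : Matrix (Fin K) (Fin K) ℂ) - M = c • (1 - y) := by
      rw [smul_sub, hy, smul_smul, mul_inv_cancel₀ hc0, one_smul]
    rw [hfac, smul_mul_assoc, mul_smul_comm, hmulR, smul_smul, inv_mul_cancel₀ hc0, one_smul]
  · intro i j
    have hentry : HasSum (fun n : ℕ => (y ^ n) i j) (S0 i j) := by
      have := (entryCLM i j).hasSum hS0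
      exact this
    have := hentry.mul_left c⁻¹
    have heq : ∀ n : ℕ, c⁻¹ * (y ^ n) i j = c⁻¹ ^ (n + 1) * (M ^ n) i j := by
      intro n
      rw [hy, smul_pow]
      have : ((c⁻¹ ^ n • M ^ n) : Matrix (Fin K) (Fin K) ℂ) i j = c⁻¹ ^ n * (M ^ n) i j := rfl
      rw [this, ← mul_assoc, ← pow_succ']
    simp_rw [heq] at this
    have : HasSum (fun n : ℕ => c⁻¹ ^ (n + 1) * (M ^ n) i j) ((c⁻¹ • S0) i j) := this
    exact this

end RowvecAux

namespace RowvecAux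

lemma neumann_inv [Nonempty (Fin K)] (M : Matrix (Fin K) (Fin K) ℂ) {s ρ₀ : ℝ}
    (hs : 0 < s) (hρ₀ : 0 ≤ ρ₀) (hρs : ρ₀ < s) (hspec : ∀ μ ∈ spectrum ℂ M, ‖μ‖ ≤ ρ₀)
    {c : ℂ} (hc : s ≤ ‖c‖) :
    IsUnit (c • (1 : Matrix (Fin K) (Fin K) ℂ) - M).det ∧
    ∀ i j, HasSum (fun p : ℕ => c⁻¹ ^ (p + 1) * (M ^ p) i j)
      ((c • (1 : Matrix (Fin K) (Fin K) ℂ) - M)⁻¹ i j) := by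
  obtain ⟨S, hL, hR, hS⟩ := neumann M hs hρ₀ hρs hspec hc
  have hdet : IsUnit (c • (1 : Matrix (Fin K) (Fin K) ℂ) - M).det :=
    Matrix.isUnit_det_of_right_inverse hL
  have hinv : (c • (1 : Matrix (Fin K) (Fin K) ℂ) - M)⁻¹ = S := Matrix.inv_eq_right_inv hL
  exact ⟨hdet, by rw [hinv]; exact hS⟩

lemma pow_entries_nonneg (N : Matrix (Fin K) (Fin K) ℝ) (hN : ∀ i j, 0 ≤ N i j) :
    ∀ (p : ℕ) (i j : Fin K), 0 ≤ (N ^ p) i j := by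
  intro p
  induction p with
  | zero =>
    intro i j; rw [pow_zero]
    by_cases h : i = j <;> simp [Matrix.one_apply, h]
  | succ p ih =>
    intro i j; rw [pow_succ, Matrix.mul_apply]
    exact Finset.sum_nonneg fun k _ => mul_nonneg (ih i k) (hN k j)

lemma smul_one_sub_mul (a b : ℂ) (X : Matrix (Fin K) (Fin K) ℂ) :
    (a • (1 : Matrix (Fin K) (Fin K) ℂ) - X) * (b • 1 - X)
      = (a * b) • (1 : Matrix (Fin K) (Fin K) ℂ) - (a + b) • X + X ^ 2 := by
  have e1 : (a • (1 : Matrix (Fin K) (Fin K) ℂ)) * (b • 1) = (a * b) • 1 := by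
    rw [smul_mul_assoc, mul_smul_comm, smul_smul, one_mul]
  have e2 : (a • (1 : Matrix (Fin K) (Fin K) ℂ)) * X = a • X := by
    rw [smul_mul_assoc, one_mul]
  have e3 : X * (b • (1 : Matrix (Fin K) (Fin K) ℂ)) = b • X := by
    rw [mul_smul_comm, mul_one]
  rw [sub_mul, mul_sub, mul_sub, e1, e2, e3, ← pow_two, add_smul]
  abel

end RowvecAux

open RowvecAux

/-- Let `R = sI − N` be a nonsingular M-matrix (`s > 0`, `N` entrywise nonnegative,
spectral radius `ρ(N) < s`) with all column sums of `R` nonnegative (`e'R ≥ 0'`).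
Then for every `λ > 0`, the matrix `R² + λI` is invertible and every entry of the
row vector `e'(R² + λI)⁻¹` is strictly positive. -/
theorem rowvec_pos_Msq_add {K : ℕ} (R N : Matrix (Fin K) (Fin K) ℝ) (s : ℝ)
    (hs : 0 < s) (hN : ∀ i j, 0 ≤ N i j)
    (hR : R = s • (1 : Matrix (Fin K) (Fin K) ℝ) - N)
    (hρ : ∀ μ ∈ spectrum ℂ (N.map (Complex.ofReal)), ‖μ‖ < s)
    (heR : ∀ j, 0 ≤ ∑ i, R i j)
    (lam : ℝ) (hlam : 0 < lam) :
    IsUnit (R ^ 2 + lam • (1 : Matrix (Fin K) (Fin K) ℝ)) ∧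
    ∀ j, 0 < ∑ i, (R ^ 2 + lam • (1 : Matrix (Fin K) (Fin K) ℝ))⁻¹ i j := by
  rcases isEmpty_or_nonempty (Fin K) with hK | hK
  · haveI : Subsingleton (Matrix (Fin K) (Fin K) ℝ) :=
      ⟨fun a b => by ext i j; exact hK.elim i⟩
    exact ⟨isUnit_of_subsingleton _, fun j => hK.elim j⟩
  set t := Real.sqrt lam with htdef
  have ht : 0 < t := Real.sqrt_pos.2 hlam
  have ht2 : t ^ 2 = lam := Real.sq_sqrt hlam.le
  set Nc := N.map Complex.ofReal with hNcdef
  obtain ⟨ρ₀, hρ₀, hρs, hspec⟩ := RowvecAux.exists_spec_bound Nc hρ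
  set Φ : Matrix (Fin K) (Fin K) ℝ →+* Matrix (Fin K) (Fin K) ℂ :=
    Complex.ofRealHom.mapMatrix with hΦdef
  have hΦ : ∀ X : Matrix (Fin K) (Fin K) ℝ, Φ X = X.map Complex.ofReal := fun X => rfl
  set cm : ℂ := (s : ℂ) - (t : ℂ) * Complex.I with hcmdef
  set cp : ℂ := (s : ℂ) + (t : ℂ) * Complex.I with hcpdef
  have hnorm_s : ‖((s : ℂ))‖ = s := by
    rw [Complex.norm_real]; exact abs_of_pos hs
  have hnsq : ∀ c : ℂ, ‖c‖ ^ 2 = c.re ^ 2 + c.im ^ 2 := by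
    intro c
    rw [Complex.sq_norm, Complex.normSq_apply]; ring
  have hcm_norm : s < ‖cm‖ := by
    apply lt_of_pow_lt_pow_left₀ 2 (norm_nonneg _)
    rw [hnsq]
    simp only [hcmdef, Complex.sub_re, Complex.sub_im, Complex.mul_re, Complex.mul_im,
      Complex.I_re, Complex.I_im, Complex.ofReal_re, Complex.ofReal_im]
    nlinarith [ht]
  have hcp_norm : s < ‖cp‖ := by
    apply lt_of_pow_lt_pow_left₀ 2 (norm_nonneg _)
    rw [hnsq]
    simp only [hcpdef, Complex.add_re, Complex.add_im, Complex.mul_re, Complex.mul_im,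
      Complex.I_re, Complex.I_im, Complex.ofReal_re, Complex.ofReal_im]
    nlinarith [ht]
  obtain ⟨hdet0, hsum0⟩ := neumann_inv Nc hs hρ₀ hρs hspec (c := (s : ℂ)) (le_of_eq hnorm_s.symm)
  obtain ⟨hdetm, hsumm⟩ := neumann_inv Nc hs hρ₀ hρs hspec (c := cm) hcm_norm.le
  obtain ⟨hdetp, _⟩ := neumann_inv Nc hs hρ₀ hρs hspec (c := cp) hcp_norm.le
  set A := R ^ 2 + lam • (1 : Matrix (Fin K) (Fin K) ℝ) with hA
  have hmap1 : ∀ r : ℝ, Φ (r • (1 : Matrix (Fin K) (Fin K) ℝ))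
      = (r : ℂ) • (1 : Matrix (Fin K) (Fin K) ℂ) := by
    intro r
    rw [hΦ]
    ext i j
    by_cases h : i = j <;>
      simp [Matrix.map_apply, Matrix.smul_apply, Matrix.one_apply, h]
  have hRc : Φ R = (s : ℂ) • 1 - Nc := by
    rw [hR, map_sub, hmap1, hΦ]
  have hAc : Φ A = (Φ R) ^ 2 + (lam : ℂ) • 1 := by
    rw [hA, map_add, map_pow, hmap1]
  have hmulcm : cm * cp = (s : ℂ) ^ 2 + (lam : ℂ) := by
    have h1 : cm * cp = (s : ℂ) ^ 2 - ((t : ℂ) * Complex.I) ^ 2 := by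
      rw [hcmdef, hcpdef]; ring
    rw [h1, mul_pow, Complex.I_sq]
    have : ((t : ℂ)) ^ 2 = (lam : ℂ) := by
      rw [← Complex.ofReal_pow, ht2]
    rw [this]; ring
  have haddcm : cm + cp = (s : ℂ) + (s : ℂ) := by
    rw [hcmdef, hcpdef]; ring
  have hfact : Φ A = (cm • 1 - Nc) * (cp • 1 - Nc) := by
    rw [hAc, hRc, smul_one_sub_mul, hmulcm, haddcm]
    have e : ((s : ℂ) • (1 : Matrix (Fin K) (Fin K) ℂ) - Nc) ^ 2
        = ((s : ℂ) * (s : ℂ)) • (1 : Matrix (Fin K) (Fin K) ℂ)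
          - ((s : ℂ) + (s : ℂ)) • Nc + Nc ^ 2 := by
      rw [pow_two, smul_one_sub_mul]
    rw [e]
    rw [show ((s:ℂ)^2 + (lam:ℂ)) = (s:ℂ)*(s:ℂ) + (lam:ℂ) by ring, add_smul]
    module
  have hdetAc : IsUnit (Φ A).det := by
    rw [hfact, Matrix.det_mul]; exact hdetm.mul hdetp
  have hdetA : IsUnit A.det := by
    have hmapdet : (A.det : ℂ) = (Φ A).det := RingHom.map_det Complex.ofRealHom A
    have hne : A.det ≠ 0 := by
      intro h0
      have : ((0:ℝ) : ℂ) = (Φ A).det := by rw [← h0]; exact hmapdet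
      rw [Complex.ofReal_zero] at this
      exact hdetAc.ne_zero this.symm
    exact isUnit_iff_ne_zero.mpr hne
  have hdetR : IsUnit R.det := by
    have hmapdet : (R.det : ℂ) = (Φ R).det := RingHom.map_det Complex.ofRealHom R
    have hne : R.det ≠ 0 := by
      intro h0
      have : ((0:ℝ) : ℂ) = (Φ R).det := by rw [← h0]; exact hmapdet
      rw [Complex.ofReal_zero, hRc] at this
      exact hdet0.ne_zero this.symm
    exact isUnit_iff_ne_zero.mpr hne
  refine ⟨(Matrix.isUnit_iff_isUnit_det A).mpr hdetA, ?_⟩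
  -- inverses over ℂ
  have hAinvc : (Φ A)⁻¹ = Φ (A⁻¹) :=
    Matrix.inv_eq_right_inv (by rw [← _root_.map_mul, Matrix.mul_nonsing_inv _ hdetA, _root_.map_one])
  have hRinvc : ((s : ℂ) • 1 - Nc)⁻¹ = Φ (R⁻¹) := by
    rw [← hRc]
    exact Matrix.inv_eq_right_inv (by rw [← _root_.map_mul, Matrix.mul_nonsing_inv _ hdetR, _root_.map_one])
  have hdetAc' : IsUnit ((cm • 1 - Nc) * (cp • 1 - Nc)).det := by rw [← hfact]; exact hdetAc
  have hinvm : (cm • (1 : Matrix (Fin K) (Fin K) ℂ) - Nc)⁻¹ = (cp • 1 - Nc) * (Φ A)⁻¹ :=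
    Matrix.inv_eq_right_inv
      (by rw [← Matrix.mul_assoc, ← hfact, Matrix.mul_nonsing_inv _ hdetAc])
  have hNcpow : ∀ p : ℕ, Nc ^ p = (N ^ p).map Complex.ofReal := by
    intro p
    rw [hNcdef, ← hΦ, ← map_pow, hΦ]
  -- real Neumann series for R⁻¹
  have hsumRinv : ∀ k j, HasSum (fun p : ℕ => (s⁻¹ : ℝ) ^ (p + 1) * (N ^ p) k j) (R⁻¹ k j) := by
    intro k j
    have h := Complex.reCLM.hasSum (hsum0 k j)
    have hterm : ∀ p : ℕ, Complex.reCLM (((s:ℂ))⁻¹ ^ (p + 1) * (Nc ^ p) k j)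
        = (s⁻¹ : ℝ) ^ (p + 1) * (N ^ p) k j := by
      intro p
      rw [hNcpow]
      simp [Matrix.map_apply, ← Complex.ofReal_inv, ← Complex.ofReal_pow, ← Complex.ofReal_mul]
    have hval : Complex.reCLM ((((s:ℂ) • 1 - Nc)⁻¹) k j) = R⁻¹ k j := by
      rw [hRinvc, hΦ]
      simp [Matrix.map_apply]
    rw [← hval]
    exact h.congr_fun fun p => (hterm p).symm
  -- coefficients d p > 0
  set d : ℕ → ℝ := fun p => (s⁻¹ : ℝ) ^ (p + 1) - (cm⁻¹ ^ (p + 1)).re with hddef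
  have hd : ∀ p, 0 < d p := by
    intro p
    have h1 : (cm⁻¹ ^ (p + 1)).re ≤ ‖cm⁻¹ ^ (p + 1)‖ := Complex.re_le_norm _
    have h2 : ‖cm⁻¹ ^ (p + 1)‖ = ‖cm‖⁻¹ ^ (p + 1) := by
      rw [norm_pow, norm_inv]
    have h3 : ‖cm‖⁻¹ < s⁻¹ := by
      rw [inv_lt_inv₀ (lt_trans hs hcm_norm) hs]
      exact hcm_norm
    have h4 : ‖cm‖⁻¹ ^ (p + 1) < (s⁻¹:ℝ) ^ (p + 1) :=
      pow_lt_pow_left₀ h3 (inv_nonneg.mpr (norm_nonneg _)) (Nat.succ_ne_zero p)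
    simp only [hddef]
    rw [h2] at h1
    linarith
  -- the key algebraic identity
  have hRAkey : R⁻¹ * A = R + lam • R⁻¹ := by
    rw [hA, Matrix.mul_add, pow_two, ← Matrix.mul_assoc, Matrix.nonsing_inv_mul _ hdetR,
      Matrix.one_mul, Matrix.mul_smul, Matrix.mul_one]
  have hkey : R⁻¹ - R * A⁻¹ = lam • (R⁻¹ * A⁻¹) := by
    have h1 : R⁻¹ * A * A⁻¹ = R⁻¹ := by
      rw [Matrix.mul_assoc, Matrix.mul_nonsing_inv _ hdetA, Matrix.mul_one]
    calc R⁻¹ - R * A⁻¹ = R⁻¹ * A * A⁻¹ - R * A⁻¹ := by rw [h1]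
      _ = (R + lam • R⁻¹) * A⁻¹ - R * A⁻¹ := by rw [hRAkey]
      _ = lam • (R⁻¹ * A⁻¹) := by
          rw [Matrix.add_mul, Matrix.smul_mul, add_sub_cancel_left]
  -- HasSum for λ·(R⁻¹A⁻¹) entries
  have hsumG : ∀ k j, HasSum (fun p : ℕ => d p * (N ^ p) k j)
      (lam * ((R⁻¹ * A⁻¹) k j)) := by
    intro k j
    have hm := Complex.reCLM.hasSum (hsumm k j)
    have hterm : ∀ p : ℕ, Complex.reCLM (cm⁻¹ ^ (p + 1) * (Nc ^ p) k j)
        = (cm⁻¹ ^ (p + 1)).re * (N ^ p) k j := by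
      intro p
      rw [hNcpow]
      simp [Matrix.map_apply, Complex.mul_re]
    have hcp1 : cp • (1 : Matrix (Fin K) (Fin K) ℂ) - Nc
        = Φ R + ((t : ℂ) * Complex.I) • 1 := by
      rw [hRc, hcpdef, add_smul]
      abel
    have hval : Complex.reCLM ((((cm • 1 - Nc))⁻¹) k j) = (R * A⁻¹) k j := by
      rw [hinvm, hcp1, Matrix.add_mul, hAinvc, ← _root_.map_mul, Matrix.smul_mul,
        Matrix.one_mul]
      simp [Matrix.add_apply, Matrix.smul_apply, hΦ, Matrix.map_apply, Complex.add_re,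
        Complex.mul_re, Complex.I_re, Complex.I_im, Complex.ofReal_re, Complex.ofReal_im,
        smul_eq_mul]
    have hm' : HasSum (fun p : ℕ => (cm⁻¹ ^ (p + 1)).re * (N ^ p) k j) ((R * A⁻¹) k j) := by
      rw [← hval]
      exact hm.congr_fun fun p => (hterm p).symm
    have hsub := (hsumRinv k j).sub hm'
    have heq : ∀ p : ℕ, (s⁻¹:ℝ) ^ (p + 1) * (N ^ p) k j - (cm⁻¹ ^ (p + 1)).re * (N ^ p) k j
        = d p * (N ^ p) k j := by
      intro p; rw [hddef]; ring
    have hv2 : R⁻¹ k j - (R * A⁻¹) k j = lam * ((R⁻¹ * A⁻¹) k j) := by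
      have := congrFun (congrFun hkey k) j
      simpa [Matrix.sub_apply, Matrix.smul_apply, smul_eq_mul] using this
    rw [← hv2]
    exact hsub.congr_fun fun p => (heq p).symm
  -- final positivity of row sums
  intro j
  have hGnonneg : ∀ k, 0 ≤ (R⁻¹ * A⁻¹) k j := by
    intro k
    have h0 : (0:ℝ) ≤ lam * ((R⁻¹ * A⁻¹) k j) :=
      hasSum_le (fun p => mul_nonneg (hd p).le (pow_entries_nonneg N hN p k j))
        hasSum_zero (hsumG k j)
    nlinarith
  have hArep : A⁻¹ = R * (R⁻¹ * A⁻¹) := by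
    rw [← Matrix.mul_assoc, Matrix.mul_nonsing_inv _ hdetR, Matrix.one_mul]
  have hsum_formula : ∑ i, A⁻¹ i j = ∑ k, (∑ i, R i k) * ((R⁻¹ * A⁻¹) k j) := by
    conv_lhs => rw [hArep]
    simp_rw [Matrix.mul_apply]
    rw [Finset.sum_comm]
    simp_rw [← Finset.sum_mul]
  have hone : ∑ k, (∑ i, R i k) * (R⁻¹ k j) = 1 := by
    simp_rw [Finset.sum_mul]
    rw [Finset.sum_comm]
    have hrow : ∀ i, ∑ k, R i k * R⁻¹ k j = (R * R⁻¹) i j := fun i => (Matrix.mul_apply).symm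
    calc ∑ i, ∑ k, R i k * R⁻¹ k j = ∑ i, (R * R⁻¹) i j := by simp_rw [hrow]
      _ = ∑ i, (1 : Matrix (Fin K) (Fin K) ℝ) i j := by rw [Matrix.mul_nonsing_inv _ hdetR]
      _ = 1 := by simp [Matrix.one_apply]
  obtain ⟨k, hk⟩ : ∃ k, 0 < (∑ i, R i k) * (R⁻¹ k j) := by
    by_contra hcon
    push_neg at hcon
    have : (1:ℝ) ≤ 0 := hone ▸ Finset.sum_nonpos fun k _ => hcon k
    linarith
  have hwk : 0 < ∑ i, R i k := by
    rcases (heR k).lt_or_eq with h | h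
    · exact h
    · exfalso; rw [← h, zero_mul] at hk; exact lt_irrefl 0 hk
  have hRinvkj : 0 < R⁻¹ k j := by
    by_contra h
    push_neg at h
    have := mul_nonpos_of_nonneg_of_nonpos hwk.le h
    linarith
  obtain ⟨p, hp⟩ : ∃ p, 0 < (N ^ p) k j := by
    by_contra hcon
    push_neg at hcon
    have hzero : ∀ p : ℕ, (s⁻¹:ℝ) ^ (p + 1) * (N ^ p) k j = 0 := by
      intro p
      rw [le_antisymm (hcon p) (pow_entries_nonneg N hN p k j), mul_zero]
    have h := hsumRinv k j
    rw [funext hzero] at h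
    have := h.unique hasSum_zero
    linarith
  have hGkj : 0 < (R⁻¹ * A⁻¹) k j := by
    have hle : d p * (N ^ p) k j ≤ lam * ((R⁻¹ * A⁻¹) k j) :=
      le_hasSum (hsumG k j) p fun m _ => mul_nonneg (hd m).le (pow_entries_nonneg N hN m k j)
    have hpos : 0 < lam * ((R⁻¹ * A⁻¹) k j) := lt_of_lt_of_le (mul_pos (hd p) hp) hle
    nlinarith
  rw [hsum_formula]
  apply Finset.sum_pos'
  · intro k' _
    exact mul_nonneg (heR k') (hGnonneg k')
  · exact ⟨k, Finset.mem_univ k, mul_pos hwk hGkj⟩
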